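/- If τ is a positively expansive cellular automaton on A^{Σ*} with expansivity constant N, then there exists t ≥ 1 such that for every n ≥ 0 and all configurations f₁, f₂: if τ^i(f₁)|_{Δ_{N+n}} = τ^i(f₂)|_{Δ_{N+n}} for all 0 ≤ i ≤ t, then f₁|_{Δ_{N+n+1}} = f₂|_{Δ_{N+n+1}}. -/

import Mathlib

open Function

variable {Sig A : Type*}

/-- Configurations over the tree `Sig*`: maps from the free monoid (lists) to `A`. -/
abbrev Config (Sig A : Type*) := List Sig → A

/-- Shift action: `(shift f v) w = f (v ++ w)`. -/
def shift (f : Config Sig A) (v : List Sig) : Config Sig A := fun w => f (v ++ w)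

/-- `Delta Sig n` is the set of words of length `< n` (i.e. `Δ_n`). -/
def Delta (Sig : Type*) (n : ℕ) : Type _ := {w : List Sig // w.length < n}

/-- Restriction of a configuration to `Δ_n`. -/
def restrict (f : Config Sig A) (n : ℕ) : Delta Sig n → A := fun w => f w.val

/-- The CA defined by a local map `μ` of radius `r`. -/
def caMap (r : ℕ) (μ : (Delta Sig (r + 1) → A) → A) : Config Sig A → Config Sig A :=
  fun f v => μ (restrict (shift f v) (r + 1))

/-- `τ` is a cellular automaton: it admits a radius `r ≥ 1` and a local defining map. -/
def IsCA (τ : Config Sig A → Config Sig A) : Prop :=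
  ∃ r : ℕ, 1 ≤ r ∧ ∃ μ : (Delta Sig (r + 1) → A) → A,
    ∀ (f : Config Sig A) (v : List Sig), τ f v = μ (restrict (shift f v) (r + 1))

/-- A subshift: a closed, shift-invariant set of configurations. -/
def IsSubshift [TopologicalSpace A] (X : Set (Config Sig A)) : Prop :=
  IsClosed X ∧ ∀ f ∈ X, ∀ v : List Sig, shift f v ∈ X

/-- The blocks of size `n` of `X`. -/
def blockSet (X : Set (Config Sig A)) (n : ℕ) : Set (Delta Sig n → A) :=
  {p | ∃ f ∈ X, restrict f n = p}

/-- Positive expansiveness with constant `N`. -/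
def PosExpansive (τ : Config Sig A → Config Sig A) (N : ℕ) : Prop :=
  1 ≤ N ∧ ∀ f₁ f₂ : Config Sig A, f₁ ≠ f₂ →
    ∃ t : ℕ, restrict (τ^[t] f₁) N ≠ restrict (τ^[t] f₂) N

/-- The set `P(τ, n, t)` of `t`-tuples of traces on `Δ_n`. -/
def Pset (τ : Config Sig A → Config Sig A) (n t : ℕ) : Set (Fin t → Delta Sig n → A) :=
  {s | ∃ f : Config Sig A, ∀ i : Fin t, s i = restrict (τ^[(i : ℕ)] f) n}

/-- The block `a ◁ p` on `Δ_{r+1}` with root value `a` and agreeing with `p` elsewhere. -/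
def rootIns (r : ℕ) (a : A) (p : {w : List Sig // w.length < r + 1 ∧ w ≠ []} → A) :
    Delta Sig (r + 1) → A :=
  fun w => if h : w.val.length = 0 then a else
    p ⟨w.val, ⟨w.2, fun he => h (by simp [he])⟩⟩

/-- Permutivity: for every pattern on `Δ_{r+1} \ {ε}`, the induced map on root values is
a permutation of `A`. -/
def Permutive (r : ℕ) (μ : (Delta Sig (r + 1) → A) → A) : Prop :=
  ∀ p : {w : List Sig // w.length < r + 1 ∧ w ≠ []} → A,
    Function.Bijective (fun a : A => μ (rootIns r a p))

/-- The image under the local map `μ` of a block of size `n + r`: a block of size `n`. -/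
def blockImage (r n : ℕ) (μ : (Delta Sig (r + 1) → A) → A)
    (p : Delta Sig (n + r) → A) : Delta Sig n → A :=
  fun v => μ (fun w => p ⟨v.val ++ w.val, by
    have hv := v.2; have hw := w.2
    simp only [List.length_append]; omega⟩)

/-- A diamond of `(r, μ)`: two distinct blocks of size `n = m + r > 2r + 2` coinciding
with a block `p ∈ A^{Δ_r}` on `Δ_r` and on `vΔ_r` for every `v` of length `m = n - r`,
with the same image under `μ`. -/
def HasDiamond (r : ℕ) (μ : (Delta Sig (r + 1) → A) → A) : Prop :=
  ∃ (m : ℕ) (_ : r + 2 < m) (p : Delta Sig r → A)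
    (p₁ p₂ : Delta Sig (m + r) → A),
    p₁ ≠ p₂ ∧
    (∀ w : Delta Sig r,
      p₁ ⟨w.val, by have := w.2; omega⟩ = p w ∧
      p₂ ⟨w.val, by have := w.2; omega⟩ = p w) ∧
    (∀ v : List Sig, ∀ hv : v.length = m, ∀ w : Delta Sig r,
      p₁ ⟨v ++ w.val, by have := w.2; simp only [List.length_append]; omega⟩ = p w ∧
      p₂ ⟨v ++ w.val, by have := w.2; simp only [List.length_append]; omega⟩ = p w) ∧
    blockImage r m μ p₁ = blockImage r m μ p₂

/-- Right-closingness of the CA `caMap r μ`. -/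
def RightClosing (r : ℕ) (μ : (Delta Sig (r + 1) → A) → A) : Prop :=
  ∃ N : ℕ, ∀ (p : Delta Sig r → A) (q : Delta Sig (r * N) → A),
    (∃ f : Config Sig A, restrict f r = p ∧ restrict (caMap r μ f) (r * N) = q) →
    ∃! ps : {v : List Sig // v.length = r} → Delta Sig r → A,
      ∀ f : Config Sig A, restrict f r = p → restrict (caMap r μ f) (r * N) = q →
        ∀ (v : {v : List Sig // v.length = r}) (w : Delta Sig r),
          f (v.val ++ w.val) = ps v w



section AuxLemmas
variable {Sig A : Type*}

lemma shift_shift (f : Config Sig A) (v w : List Sig) :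
    shift (shift f v) w = shift f (v ++ w) := by
  funext x; simp [shift, List.append_assoc]

lemma tau_shift {τ : Config Sig A → Config Sig A} {r : ℕ}
    {μ : (Delta Sig (r + 1) → A) → A}
    (hμ : ∀ (f : Config Sig A) (v : List Sig), τ f v = μ (restrict (shift f v) (r + 1)))
    (f : Config Sig A) (v : List Sig) : τ (shift f v) = shift (τ f) v := by
  funext x
  show τ (shift f v) x = τ f (v ++ x)
  rw [hμ, hμ, shift_shift]

lemma tau_iter_shift {τ : Config Sig A → Config Sig A} {r : ℕ}
    {μ : (Delta Sig (r + 1) → A) → A}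
    (hμ : ∀ (f : Config Sig A) (v : List Sig), τ f v = μ (restrict (shift f v) (r + 1)))
    (f : Config Sig A) (v : List Sig) (i : ℕ) :
    τ^[i] (shift f v) = shift (τ^[i] f) v := by
  induction i with
  | zero => simp
  | succ i ih =>
      rw [Function.iterate_succ_apply', Function.iterate_succ_apply', ih, tau_shift hμ]

lemma locality {τ : Config Sig A → Config Sig A} {r : ℕ}
    {μ : (Delta Sig (r + 1) → A) → A}
    (hμ : ∀ (f : Config Sig A) (v : List Sig), τ f v = μ (restrict (shift f v) (r + 1))) :
    ∀ (s m : ℕ) (f f' : Config Sig A),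
      (∀ x : List Sig, x.length < m + s * r → f x = f' x) →
      ∀ x : List Sig, x.length < m → τ^[s] f x = τ^[s] f' x := by
  intro s
  induction s with
  | zero =>
      intro m f f' h x hx
      simpa using h x (by simpa using hx)
  | succ s ih =>
      intro m f f' h x hx
      rw [Function.iterate_succ_apply, Function.iterate_succ_apply]
      refine ih m (τ f) (τ f') ?_ x hx
      intro x' hx'
      rw [hμ, hμ]
      congr 1
      funext y
      simp only [restrict, shift]
      refine h (x' ++ y.val) ?_
      have hy := y.2
      have hmul : (s + 1) * r = s * r + r := Nat.succ_mul s r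
      simp only [List.length_append]
      omega

lemma ultra_const {B : Type*} [Finite B] (U : Ultrafilter ℕ) (φ : ℕ → B) :
    ∃ b : B, ∀ᶠ t in (U : Filter ℕ), φ t = b := by
  by_contra hc
  push_neg at hc
  have h2 : ∀ b : B, ∀ᶠ t in (U : Filter ℕ), φ t ≠ b := fun b =>
    hc b
  obtain ⟨t, ht⟩ := (Filter.eventually_all.2 h2).exists
  exact ht (φ t) rfl

end AuxLemmas

/-- existence of `t` (one-step determination) for expansive CA. -/
theorem expansive_exists_t [Finite Sig] [Finite A] [Nonempty A]
    (τ : Config Sig A → Config Sig A) (hτ : IsCA τ) (N : ℕ)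
    (hexp : PosExpansive τ N) :
    ∃ t : ℕ, 1 ≤ t ∧ ∀ (n : ℕ) (f₁ f₂ : Config Sig A),
      (∀ i ≤ t, restrict (τ^[i] f₁) (N + n) = restrict (τ^[i] f₂) (N + n)) →
      restrict f₁ (N + n + 1) = restrict f₂ (N + n + 1) := by
  classical
  obtain ⟨r, hr1, μ, hμ⟩ := hτ
  obtain ⟨hN1, hexp'⟩ := hexp
  by_contra hcon
  push_neg at hcon
  have h' : ∀ t : ℕ, ∃ n f₁ f₂,
      (∀ i ≤ t, restrict (τ^[i] f₁) (N + n) = restrict (τ^[i] f₂) (N + n)) ∧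
      restrict f₁ (N + n + 1) ≠ restrict f₂ (N + n + 1) := by
    intro t
    obtain ⟨n, f₁, f₂, h1, h2⟩ := hcon (t + 1) (by omega)
    exact ⟨n, f₁, f₂, fun i hi => h1 i (by omega), h2⟩
  choose n f₁ f₂ hagree hne using h'
  have hud : ∀ t, ∃ u : Delta Sig (N + n t + 1), f₁ t u.val ≠ f₂ t u.val := by
    intro t
    by_contra hcu
    push_neg at hcu
    exact hne t (funext fun u => hcu u)
  choose u hu using hud
  have hlen : ∀ t, (u t).val.length = N + n t := by
    intro t
    have h0 := hagree t 0 (Nat.zero_le t)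
    by_contra hl
    have hlt : (u t).val.length < N + n t := by have := (u t).2; omega
    have := congrFun h0 ⟨(u t).val, hlt⟩
    simp only [Function.iterate_zero, id_eq, restrict] at this
    exact hu t this
  set v : ℕ → List Sig := fun t => (u t).val.take (n t) with hv
  set w : ℕ → List Sig := fun t => (u t).val.drop (n t) with hw
  have hvlen : ∀ t, (v t).length = n t := by
    intro t; simp only [hv, List.length_take]; have := hlen t; omega
  have hwlen : ∀ t, (w t).length = N := by
    intro t; simp only [hw, List.length_drop]; have := hlen t; omega
  have hvw : ∀ t, v t ++ w t = (u t).val := fun t => List.take_append_drop _ _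
  set g₁ : ℕ → Config Sig A := fun t => shift (f₁ t) (v t) with hg₁
  set g₂ : ℕ → Config Sig A := fun t => shift (f₂ t) (v t) with hg₂
  have hgne : ∀ t, g₁ t (w t) ≠ g₂ t (w t) := by
    intro t
    simp only [hg₁, hg₂, shift, hvw]
    exact hu t
  have hgagree : ∀ t, ∀ i ≤ t, ∀ x : List Sig, x.length < N →
      τ^[i] (g₁ t) x = τ^[i] (g₂ t) x := by
    intro t i hi x hx
    simp only [hg₁, hg₂]
    rw [tau_iter_shift hμ, tau_iter_shift hμ]
    show τ^[i] (f₁ t) (v t ++ x) = τ^[i] (f₂ t) (v t ++ x)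
    have hlen2 : (v t ++ x).length < N + n t := by
      simp only [List.length_append, hvlen t]; omega
    have := congrFun (hagree t i hi) ⟨v t ++ x, hlen2⟩
    simpa [restrict] using this
  let U : Ultrafilter ℕ := Ultrafilter.of Filter.atTop
  have hUtop : (U : Filter ℕ) ≤ Filter.atTop := Ultrafilter.of_le _
  have hfinN : Finite {l : List Sig // l.length = N} :=
    Set.Finite.to_subtype (List.finite_length_eq Sig N)
  obtain ⟨⟨w₀, a, b⟩, hW⟩ := ultra_const U
    (fun t => ((⟨w t, hwlen t⟩ : {l : List Sig // l.length = N}), g₁ t (w t), g₂ t (w t)))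
  have hWw : ∀ᶠ t in (U : Filter ℕ), w t = w₀.val :=
    hW.mono fun t ht => by
      have := congrArg (fun p => p.1.val) ht; simpa using this
  have hWa : ∀ᶠ t in (U : Filter ℕ), g₁ t (w t) = a :=
    hW.mono fun t ht => congrArg (fun p => p.2.1) ht
  have hWb : ∀ᶠ t in (U : Filter ℕ), g₂ t (w t) = b :=
    hW.mono fun t ht => congrArg (fun p => p.2.2) ht
  have hab : a ≠ b := by
    obtain ⟨t, ht1, ht2⟩ := (hWa.and hWb).exists
    rw [← ht1, ← ht2]
    exact hgne t
  choose G₁ hG₁ using fun x : List Sig => ultra_const U (fun t => g₁ t x)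
  choose G₂ hG₂ using fun x : List Sig => ultra_const U (fun t => g₂ t x)
  have hG1a : G₁ w₀.val = a := by
    obtain ⟨t, ht1, ht2, ht3⟩ := ((hG₁ w₀.val).and (hWw.and hWa)).exists
    rw [← ht1, ← ht2]
    exact ht3
  have hG2b : G₂ w₀.val = b := by
    obtain ⟨t, ht1, ht2, ht3⟩ := ((hG₂ w₀.val).and (hWw.and hWb)).exists
    rw [← ht1, ← ht2]
    exact ht3
  have hGne : G₁ ≠ G₂ := by
    intro he
    apply hab
    rw [← hG1a, ← hG2b, he]
  obtain ⟨s, hs⟩ := hexp' G₁ G₂ hGne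
  apply hs
  funext x
  have hfinD : Finite {l : List Sig // l.length < N + s * r} :=
    Set.Finite.to_subtype (List.finite_length_lt Sig (N + s * r))
  have E1 : ∀ᶠ t in (U : Filter ℕ),
      ∀ y : {l : List Sig // l.length < N + s * r}, g₁ t y.val = G₁ y.val :=
    Filter.eventually_all.2 fun y => hG₁ y.val
  have E2 : ∀ᶠ t in (U : Filter ℕ),
      ∀ y : {l : List Sig // l.length < N + s * r}, g₂ t y.val = G₂ y.val :=
    Filter.eventually_all.2 fun y => hG₂ y.val
  have E3 : ∀ᶠ t in (U : Filter ℕ), s ≤ t :=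
    Filter.Eventually.filter_mono hUtop (Filter.eventually_ge_atTop s)
  obtain ⟨t, ht1, ht2, ht3⟩ := (E1.and (E2.and E3)).exists
  show τ^[s] G₁ x.val = τ^[s] G₂ x.val
  have l1 : τ^[s] G₁ x.val = τ^[s] (g₁ t) x.val :=
    locality hμ s N G₁ (g₁ t) (fun y hy => (ht1 ⟨y, hy⟩).symm) x.val x.2
  have l2 : τ^[s] (g₂ t) x.val = τ^[s] G₂ x.val :=
    locality hμ s N (g₂ t) G₂ (fun y hy => ht2 ⟨y, hy⟩) x.val x.2
  rw [l1, ← l2]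
  exact hgagree t s ht3 x.val x.2
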